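/- Let (H,K,A,C) and (K,L,B,D) be Yetter-Drinfeld data such that the cotensor product A □^K B is a pure k-submodule of A ⊗ B. If M ∈ _A YD^C(H,K) and N ∈ _B YD^D(K,L), then M ⊗ N, with action (a ⊗ b)·(m ⊗ n) = am ⊗ bn of A □^K B and coaction m ⊗ n ↦ m_{[0]} ⊗ n_{[0]} ⊗ (n_{[1]} ⊗_K m_{[1]}) over D ⊗_K C, is a generalized Yetter-Drinfeld module in _{A □^K B} YD^{D ⊗_K C}(H,L). -/
import Mathlib

set_option maxHeartbeats 1600000
set_option synthInstance.maxHeartbeats 1000000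


open TensorProduct Coalgebra

/-- Let `(H,K,A,C)` and `(K,L,B,D)` be Yetter-Drinfeld data such that the cotensor
product `A □^K B ⊆ A ⊗ B` is a pure `k`-submodule.  If `M ∈ _A YD^C(H,K)` and
`N ∈ _B YD^D(K,L)`, then `M ⊗ N`, with the action `(a ⊗ b)·(m ⊗ n) = am ⊗ bn` of
`A □^K B` and the coaction `m ⊗ n ↦ m₍₀₎ ⊗ n₍₀₎ ⊗ (n₍₁₎ ⊗_K m₍₁₎)` over `D ⊗_K C`
(realized as the quotient of `D ⊗ₖ C` by the `K`-balancing submodule `S`),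
satisfies the generalized Yetter-Drinfeld compatibility condition over the
datum `(H, L, A □^K B, D ⊗_K C)`. -/
theorem genYD_tensor_is_genYD
    {k : Type} [CommRing k]
    {H : Type} [Ring H] [Bialgebra k H]
    {K : Type} [Ring K] [Bialgebra k K]
    {L : Type} [Ring L] [Bialgebra k L]
    {A : Type} [Ring A] [Algebra k A]
    {B : Type} [Ring B] [Algebra k B]
    {C : Type} [AddCommGroup C] [Module k C] [Coalgebra k C]
    {D : Type} [AddCommGroup D] [Module k D] [Coalgebra k D]
    {M : Type} [AddCommGroup M] [Module k M]
    {N : Type} [AddCommGroup N] [Module k N]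
    (ΔLA : A →ₗ[k] H ⊗[k] A) (ΔRA : A →ₗ[k] A ⊗[k] K)
    (ΔLB : B →ₗ[k] K ⊗[k] B) (ΔRB : B →ₗ[k] B ⊗[k] L)
    (actLC : K ⊗[k] C →ₗ[k] C) (actRC : C ⊗[k] H →ₗ[k] C)
    (actLD : L ⊗[k] D →ₗ[k] D) (actRD : D ⊗[k] K →ₗ[k] D)
    (μ : A ⊗[k] M →ₗ[k] M) (ρ : M →ₗ[k] M ⊗[k] C)
    (ν : B ⊗[k] N →ₗ[k] N) (ρ' : N →ₗ[k] N ⊗[k] D)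
    -- comodule and module axioms for `M` and `N`
    (hρcoassoc : (TensorProduct.assoc k M C C).toLinearMap ∘ₗ
        (LinearMap.rTensor C ρ) ∘ₗ ρ = (LinearMap.lTensor M (comul (R := k) (A := C))) ∘ₗ ρ)
    (hρcounit : (TensorProduct.rid k M).toLinearMap ∘ₗ
        (LinearMap.lTensor M (counit (R := k) (A := C))) ∘ₗ ρ = LinearMap.id)
    (hμone : ∀ m : M, μ (1 ⊗ₜ m) = m)
    (hμmul : ∀ (a b : A) (m : M), μ ((a * b) ⊗ₜ m) = μ (a ⊗ₜ μ (b ⊗ₜ m)))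
    (hρ'coassoc : (TensorProduct.assoc k N D D).toLinearMap ∘ₗ
        (LinearMap.rTensor D ρ') ∘ₗ ρ' = (LinearMap.lTensor N (comul (R := k) (A := D))) ∘ₗ ρ')
    (hρ'counit : (TensorProduct.rid k N).toLinearMap ∘ₗ
        (LinearMap.lTensor N (counit (R := k) (A := D))) ∘ₗ ρ' = LinearMap.id)
    (hνone : ∀ n : N, ν (1 ⊗ₜ n) = n)
    (hνmul : ∀ (a b : B) (n : N), ν ((a * b) ⊗ₜ n) = ν (a ⊗ₜ ν (b ⊗ₜ n)))
    -- Yetter-Drinfeld compatibility for `M` and `N`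
    (hYDM : (LinearMap.lTensor M actRC) ∘ₗ (TensorProduct.assoc k M C H).toLinearMap ∘ₗ
        (TensorProduct.comm k H (M ⊗[k] C)).toLinearMap ∘ₗ
        (LinearMap.lTensor H (ρ ∘ₗ μ)) ∘ₗ (TensorProduct.assoc k H A M).toLinearMap ∘ₗ
        (LinearMap.rTensor M ΔLA)
      = (TensorProduct.map μ actLC) ∘ₗ (TensorProduct.tensorTensorTensorComm k A K M C).toLinearMap
          ∘ₗ (LinearMap.lTensor (A ⊗[k] K) ρ) ∘ₗ (LinearMap.rTensor M ΔRA))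
    (hYDN : (LinearMap.lTensor N actRD) ∘ₗ (TensorProduct.assoc k N D K).toLinearMap ∘ₗ
        (TensorProduct.comm k K (N ⊗[k] D)).toLinearMap ∘ₗ
        (LinearMap.lTensor K (ρ' ∘ₗ ν)) ∘ₗ (TensorProduct.assoc k K B N).toLinearMap ∘ₗ
        (LinearMap.rTensor N ΔLB)
      = (TensorProduct.map ν actLD) ∘ₗ (TensorProduct.tensorTensorTensorComm k B L N D).toLinearMap
          ∘ₗ (LinearMap.lTensor (B ⊗[k] L) ρ') ∘ₗ (LinearMap.rTensor N ΔRB))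
    -- the cotensor product `A □^K B` and its purity
    (cot : Submodule k (A ⊗[k] B))
    (hcot : cot = LinearMap.ker ((LinearMap.rTensor B ΔRA) -
        (TensorProduct.assoc k A K B).symm.toLinearMap ∘ₗ (LinearMap.lTensor A ΔLB)))
    (hpure : ∀ (T : Type) [AddCommGroup T] [Module k T],
        Function.Injective (LinearMap.rTensor T cot.subtype))
    -- the `K`-balancing submodule of `D ⊗ C` presenting `D ⊗_K C`
    (S : Submodule k (D ⊗[k] C))
    (hS : S = Submodule.span k {x | ∃ (d : D) (y : K) (c : C),
        x = actRD (d ⊗ₜ y) ⊗ₜ c - d ⊗ₜ actLC (y ⊗ₜ c)}) :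
    -- the Yetter-Drinfeld compatibility condition for `M ⊗ N`
    (LinearMap.lTensor (M ⊗[k] N)
        (S.mkQ ∘ₗ (LinearMap.lTensor D actRC) ∘ₗ (TensorProduct.assoc k D C H).toLinearMap)) ∘ₗ
      (TensorProduct.assoc k (M ⊗[k] N) (D ⊗[k] C) H).toLinearMap ∘ₗ
      (TensorProduct.comm k H ((M ⊗[k] N) ⊗[k] (D ⊗[k] C))).toLinearMap ∘ₗ
      (LinearMap.lTensor H
        (((LinearMap.lTensor (M ⊗[k] N) (TensorProduct.comm k C D).toLinearMap) ∘ₗ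
            (TensorProduct.tensorTensorTensorComm k M C N D).toLinearMap ∘ₗ
            (TensorProduct.map ρ ρ')) ∘ₗ
          ((TensorProduct.map μ ν) ∘ₗ (TensorProduct.tensorTensorTensorComm k A B M N).toLinearMap))) ∘ₗ
      (TensorProduct.assoc k H (A ⊗[k] B) (M ⊗[k] N)).toLinearMap ∘ₗ
      (LinearMap.rTensor (M ⊗[k] N)
        ((TensorProduct.assoc k H A B).toLinearMap ∘ₗ (LinearMap.rTensor B ΔLA) ∘ₗ cot.subtype))
    = (TensorProduct.map
        ((TensorProduct.map μ ν) ∘ₗ (TensorProduct.tensorTensorTensorComm k A B M N).toLinearMap)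
        (S.mkQ ∘ₗ (LinearMap.rTensor C actLD) ∘ₗ (TensorProduct.assoc k L D C).symm.toLinearMap)) ∘ₗ
      (TensorProduct.tensorTensorTensorComm k (A ⊗[k] B) L (M ⊗[k] N) (D ⊗[k] C)).toLinearMap ∘ₗ
      (LinearMap.lTensor ((A ⊗[k] B) ⊗[k] L)
        ((LinearMap.lTensor (M ⊗[k] N) (TensorProduct.comm k C D).toLinearMap) ∘ₗ
          (TensorProduct.tensorTensorTensorComm k M C N D).toLinearMap ∘ₗ
          (TensorProduct.map ρ ρ'))) ∘ₗ
      (LinearMap.rTensor (M ⊗[k] N)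
        ((TensorProduct.assoc k A B L).symm.toLinearMap ∘ₗ (LinearMap.lTensor A ΔRB) ∘ₗ
          cot.subtype)) := by
  classical
  -- the balancing relation in the quotient by `S`
  have hSq : ∀ (d : D) (y : K) (c : C),
      S.mkQ (actRD (d ⊗ₜ[k] y) ⊗ₜ[k] c) = S.mkQ (d ⊗ₜ[k] actLC (y ⊗ₜ[k] c)) := by
    intro d y c
    rw [← sub_eq_zero, ← map_sub, Submodule.mkQ_apply, Submodule.Quotient.mk_eq_zero, hS]
    exact Submodule.subset_span ⟨d, y, c, rfl⟩
  -- auxiliary maps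
  set σm : A ⊗[k] M →ₗ[k] M ⊗[k] C :=
    (LinearMap.rTensor C μ) ∘ₗ (TensorProduct.assoc k A M C).symm.toLinearMap ∘ₗ
      (LinearMap.lTensor A ρ) with hσ
  set τm : (K ⊗[k] B) ⊗[k] N →ₗ[k] N ⊗[k] D :=
    (LinearMap.lTensor N actRD) ∘ₗ (TensorProduct.assoc k N D K).toLinearMap ∘ₗ
      (TensorProduct.comm k K (N ⊗[k] D)).toLinearMap ∘ₗ
      (LinearMap.lTensor K (ρ' ∘ₗ ν)) ∘ₗ (TensorProduct.assoc k K B N).toLinearMap with hτ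
  set Ξm : (M ⊗[k] C) ⊗[k] (N ⊗[k] D) →ₗ[k] (M ⊗[k] N) ⊗[k] ((D ⊗[k] C) ⧸ S) :=
    (LinearMap.lTensor (M ⊗[k] N) (S.mkQ ∘ₗ (TensorProduct.comm k C D).toLinearMap)) ∘ₗ
      (TensorProduct.tensorTensorTensorComm k M C N D).toLinearMap with hΞ
  set Θm : ((A ⊗[k] K) ⊗[k] B) ⊗[k] (M ⊗[k] N) →ₗ[k] (M ⊗[k] N) ⊗[k] ((D ⊗[k] C) ⧸ S) :=
    Ξm ∘ₗ (TensorProduct.map σm τm) ∘ₗ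
      (TensorProduct.tensorTensorTensorComm k A (K ⊗[k] B) M N).toLinearMap ∘ₗ
      (LinearMap.rTensor (M ⊗[k] N) (TensorProduct.assoc k A K B).toLinearMap) with hΘ
  -- the cotensor condition at the level of maps
  have hkey : (LinearMap.rTensor B ΔRA) ∘ₗ cot.subtype
      = ((TensorProduct.assoc k A K B).symm.toLinearMap ∘ₗ LinearMap.lTensor A ΔLB) ∘ₗ
          cot.subtype := by
    apply LinearMap.ext
    intro x
    have hx : (x : A ⊗[k] B) ∈ LinearMap.ker ((LinearMap.rTensor B ΔRA) -
        (TensorProduct.assoc k A K B).symm.toLinearMap ∘ₗ (LinearMap.lTensor A ΔLB)) := by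
      rw [← hcot]; exact x.2
    rw [LinearMap.mem_ker, LinearMap.sub_apply, sub_eq_zero] at hx
    simpa using hx
  -- left-hand side, factored through `Θm`
  have E1hom :
      (LinearMap.lTensor (M ⊗[k] N)
          (S.mkQ ∘ₗ (LinearMap.lTensor D actRC) ∘ₗ (TensorProduct.assoc k D C H).toLinearMap)) ∘ₗ
        (TensorProduct.assoc k (M ⊗[k] N) (D ⊗[k] C) H).toLinearMap ∘ₗ
        (TensorProduct.comm k H ((M ⊗[k] N) ⊗[k] (D ⊗[k] C))).toLinearMap ∘ₗ
        (LinearMap.lTensor H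
          (((LinearMap.lTensor (M ⊗[k] N) (TensorProduct.comm k C D).toLinearMap) ∘ₗ
              (TensorProduct.tensorTensorTensorComm k M C N D).toLinearMap ∘ₗ
              (TensorProduct.map ρ ρ')) ∘ₗ
            ((TensorProduct.map μ ν) ∘ₗ
              (TensorProduct.tensorTensorTensorComm k A B M N).toLinearMap))) ∘ₗ
        (TensorProduct.assoc k H (A ⊗[k] B) (M ⊗[k] N)).toLinearMap ∘ₗ
        (LinearMap.rTensor (M ⊗[k] N)
          ((TensorProduct.assoc k H A B).toLinearMap ∘ₗ (LinearMap.rTensor B ΔLA)))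
      = Θm ∘ₗ LinearMap.rTensor (M ⊗[k] N) (LinearMap.rTensor B ΔRA) := by
    apply TensorProduct.ext_fourfold'
    intro a b m n
    trans Ξm ((((LinearMap.lTensor M actRC) ∘ₗ (TensorProduct.assoc k M C H).toLinearMap ∘ₗ
        (TensorProduct.comm k H (M ⊗[k] C)).toLinearMap ∘ₗ
        (LinearMap.lTensor H (ρ ∘ₗ μ)) ∘ₗ (TensorProduct.assoc k H A M).toLinearMap ∘ₗ
        (LinearMap.rTensor M ΔLA)) (a ⊗ₜ[k] m)) ⊗ₜ[k] ((ρ' ∘ₗ ν) (b ⊗ₜ[k] n)))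
    · simp only [LinearMap.comp_apply, LinearEquiv.coe_coe, LinearMap.rTensor_tmul,
        LinearMap.lTensor_tmul, TensorProduct.map_tmul, TensorProduct.assoc_tmul,
        TensorProduct.assoc_symm_tmul, TensorProduct.comm_tmul,
        TensorProduct.tensorTensorTensorComm_tmul]
      generalize ΔLA a = u
      induction u using TensorProduct.induction_on with
      | zero => simp only [map_zero, zero_tmul, tmul_zero]
      | add y z hy hz =>
          simp only [map_add, add_tmul, tmul_add, LinearMap.add_apply]
          rw [hy, hz]
      | tmul h a' =>
          simp only [LinearMap.comp_apply, LinearEquiv.coe_coe, LinearMap.rTensor_tmul,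
            LinearMap.lTensor_tmul, TensorProduct.map_tmul, TensorProduct.assoc_tmul,
            TensorProduct.assoc_symm_tmul, TensorProduct.comm_tmul,
            TensorProduct.tensorTensorTensorComm_tmul]
          generalize ρ (μ (a' ⊗ₜ[k] m)) = v
          generalize ρ' (ν (b ⊗ₜ[k] n)) = w
          induction v using TensorProduct.induction_on with
          | zero => simp only [map_zero, zero_tmul, tmul_zero]
          | add y z hy hz =>
              simp only [map_add, add_tmul, tmul_add, LinearMap.add_apply]
              rw [hy, hz]
          | tmul m' c =>
              induction w using TensorProduct.induction_on with
              | zero => simp only [map_zero, zero_tmul, tmul_zero]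
              | add y z hy hz =>
                  simp only [map_add, add_tmul, tmul_add, LinearMap.add_apply]
                  rw [hy, hz]
              | tmul n' d =>
                  simp only [hΞ, LinearMap.comp_apply, LinearEquiv.coe_coe,
                    LinearMap.rTensor_tmul, LinearMap.lTensor_tmul, TensorProduct.map_tmul,
                    TensorProduct.assoc_tmul, TensorProduct.assoc_symm_tmul,
                    TensorProduct.comm_tmul, TensorProduct.tensorTensorTensorComm_tmul]
    · rw [hYDM]
      simp only [hΘ, hΞ, hσ, hτ, LinearMap.comp_apply, LinearEquiv.coe_coe,
        LinearMap.rTensor_tmul, LinearMap.lTensor_tmul, TensorProduct.map_tmul,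
        TensorProduct.assoc_tmul, TensorProduct.assoc_symm_tmul, TensorProduct.comm_tmul,
        TensorProduct.tensorTensorTensorComm_tmul]
      generalize ΔRA a = u
      induction u using TensorProduct.induction_on with
      | zero => simp only [map_zero, zero_tmul, tmul_zero]
      | add y z hy hz =>
          simp only [map_add, add_tmul, tmul_add, LinearMap.add_apply]
          rw [hy, hz]
      | tmul a₀ y =>
          simp only [LinearMap.comp_apply, LinearEquiv.coe_coe, LinearMap.rTensor_tmul,
            LinearMap.lTensor_tmul, TensorProduct.map_tmul, TensorProduct.assoc_tmul,
            TensorProduct.assoc_symm_tmul, TensorProduct.comm_tmul,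
            TensorProduct.tensorTensorTensorComm_tmul]
          generalize ρ m = v
          generalize ρ' (ν (b ⊗ₜ[k] n)) = w
          induction v using TensorProduct.induction_on with
          | zero => simp only [map_zero, zero_tmul, tmul_zero]
          | add y' z' hy hz =>
              simp only [map_add, add_tmul, tmul_add, LinearMap.add_apply]
              rw [hy, hz]
          | tmul m' c =>
              induction w using TensorProduct.induction_on with
              | zero => simp only [map_zero, zero_tmul, tmul_zero]
              | add y' z' hy hz =>
                  simp only [map_add, add_tmul, tmul_add, LinearMap.add_apply]
                  rw [hy, hz]
              | tmul n' d =>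
                  simp only [LinearMap.comp_apply, LinearEquiv.coe_coe, LinearMap.rTensor_tmul,
                    LinearMap.lTensor_tmul, TensorProduct.map_tmul, TensorProduct.assoc_tmul,
                    TensorProduct.assoc_symm_tmul, TensorProduct.comm_tmul,
                    TensorProduct.tensorTensorTensorComm_tmul]
                  rw [hSq]
  -- right-hand side, factored through `Θm`
  have E2hom :
      (TensorProduct.map
          ((TensorProduct.map μ ν) ∘ₗ (TensorProduct.tensorTensorTensorComm k A B M N).toLinearMap)
          (S.mkQ ∘ₗ (LinearMap.rTensor C actLD) ∘ₗ (TensorProduct.assoc k L D C).symm.toLinearMap)) ∘ₗ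
        (TensorProduct.tensorTensorTensorComm k (A ⊗[k] B) L (M ⊗[k] N) (D ⊗[k] C)).toLinearMap ∘ₗ
        (LinearMap.lTensor ((A ⊗[k] B) ⊗[k] L)
          ((LinearMap.lTensor (M ⊗[k] N) (TensorProduct.comm k C D).toLinearMap) ∘ₗ
            (TensorProduct.tensorTensorTensorComm k M C N D).toLinearMap ∘ₗ
            (TensorProduct.map ρ ρ'))) ∘ₗ
        (LinearMap.rTensor (M ⊗[k] N)
          ((TensorProduct.assoc k A B L).symm.toLinearMap ∘ₗ (LinearMap.lTensor A ΔRB)))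
      = Θm ∘ₗ LinearMap.rTensor (M ⊗[k] N)
          ((TensorProduct.assoc k A K B).symm.toLinearMap ∘ₗ LinearMap.lTensor A ΔLB) := by
    apply TensorProduct.ext_fourfold'
    intro a b m n
    trans Ξm ((σm (a ⊗ₜ[k] m)) ⊗ₜ[k]
      (((LinearMap.lTensor N actRD) ∘ₗ (TensorProduct.assoc k N D K).toLinearMap ∘ₗ
        (TensorProduct.comm k K (N ⊗[k] D)).toLinearMap ∘ₗ
        (LinearMap.lTensor K (ρ' ∘ₗ ν)) ∘ₗ (TensorProduct.assoc k K B N).toLinearMap ∘ₗ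
        (LinearMap.rTensor N ΔLB)) (b ⊗ₜ[k] n)))
    · rw [hYDN]
      simp only [hσ, hΞ, LinearMap.comp_apply, LinearEquiv.coe_coe, LinearMap.rTensor_tmul,
        LinearMap.lTensor_tmul, TensorProduct.map_tmul, TensorProduct.assoc_tmul,
        TensorProduct.assoc_symm_tmul, TensorProduct.comm_tmul,
        TensorProduct.tensorTensorTensorComm_tmul]
      generalize ΔRB b = u
      generalize ρ m = v
      generalize ρ' n = w
      induction u using TensorProduct.induction_on with
      | zero => simp only [map_zero, zero_tmul, tmul_zero]
      | add y z hy hz =>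
          simp only [map_add, add_tmul, tmul_add, LinearMap.add_apply]
          rw [hy, hz]
      | tmul b₀ l =>
          induction v using TensorProduct.induction_on with
          | zero => simp only [map_zero, zero_tmul, tmul_zero]
          | add y z hy hz =>
              simp only [map_add, add_tmul, tmul_add, LinearMap.add_apply]
              rw [hy, hz]
          | tmul m' c =>
              induction w using TensorProduct.induction_on with
              | zero => simp only [map_zero, zero_tmul, tmul_zero]
              | add y z hy hz =>
                  simp only [map_add, add_tmul, tmul_add, LinearMap.add_apply]
                  rw [hy, hz]
              | tmul n' d =>
                  simp only [LinearMap.comp_apply, LinearEquiv.coe_coe, LinearMap.rTensor_tmul,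
                    LinearMap.lTensor_tmul, TensorProduct.map_tmul, TensorProduct.assoc_tmul,
                    TensorProduct.assoc_symm_tmul, TensorProduct.comm_tmul,
                    TensorProduct.tensorTensorTensorComm_tmul]
    · simp only [hΘ, hτ, LinearMap.comp_apply, LinearEquiv.coe_coe, LinearMap.rTensor_tmul,
        LinearMap.lTensor_tmul, TensorProduct.map_tmul, TensorProduct.assoc_tmul,
        TensorProduct.assoc_symm_tmul, TensorProduct.comm_tmul,
        TensorProduct.tensorTensorTensorComm_tmul]
      generalize ΔLB b = u
      induction u using TensorProduct.induction_on with
      | zero => simp only [map_zero, zero_tmul, tmul_zero]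
      | add y z hy hz =>
          simp only [map_add, add_tmul, tmul_add, LinearMap.add_apply]
          rw [hy, hz]
      | tmul y b₀ =>
          simp only [LinearMap.comp_apply, LinearEquiv.coe_coe, LinearMap.rTensor_tmul,
            LinearMap.lTensor_tmul, TensorProduct.map_tmul, TensorProduct.assoc_tmul,
            TensorProduct.assoc_symm_tmul, TensorProduct.comm_tmul,
            TensorProduct.tensorTensorTensorComm_tmul]
  -- assemble
  trans Θm ∘ₗ LinearMap.rTensor (M ⊗[k] N) ((LinearMap.rTensor B ΔRA) ∘ₗ cot.subtype)
  · conv_rhs => rw [LinearMap.rTensor_comp, ← LinearMap.comp_assoc, ← E1hom]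
    simp only [LinearMap.rTensor_comp, LinearMap.comp_assoc]
  · conv_lhs => rw [hkey, LinearMap.rTensor_comp, ← LinearMap.comp_assoc, ← E2hom]
    simp only [LinearMap.rTensor_comp, LinearMap.comp_assoc]
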